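/- Let x,y,z,w ∈ ℝ² with w ∉ {x,y,z}. Then w ∈ conv({x,y,z}) if and only if y and z are not strictly on the same side of the line through x and w, and ∠ywx + ∠xwz ≥ π. -/

import Mathlib

open RealInnerProductSpace InnerProductGeometry

noncomputable section

section MyAux

variable {V : Type*} [NormedAddCommGroup V] [InnerProductSpace ℝ V]
  [Fact (Module.finrank ℝ V = 2)] (o : Orientation ℝ V (Fin 2))



lemma my_decomp {u : V} (hu : u ≠ 0) (v : V) :
    (‖u‖^2 : ℝ) • v = ⟪u, v⟫ • u + o.areaForm u v • o.rightAngleRotation u := by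
  have h1 : ⟪u, (‖u‖^2 : ℝ) • v - ⟪u, v⟫ • u - o.areaForm u v • o.rightAngleRotation u⟫ = 0 := by
    simp [inner_sub_right, inner_smul_right, real_inner_self_eq_norm_sq,
      o.inner_rightAngleRotation_right]
    ring
  have h2 : o.areaForm u ((‖u‖^2 : ℝ) • v - ⟪u, v⟫ • u - o.areaForm u v • o.rightAngleRotation u) = 0 := by
    simp [o.areaForm_rightAngleRotation_right, real_inner_self_eq_norm_sq]
    ring
  have h3 := o.inner_sq_add_areaForm_sq u
    ((‖u‖^2 : ℝ) • v - ⟪u, v⟫ • u - o.areaForm u v • o.rightAngleRotation u)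
  rw [h1, h2] at h3
  have hun : (0:ℝ) < ‖u‖ := norm_pos_iff.mpr hu
  have h4 : ‖(‖u‖^2 : ℝ) • v - ⟪u, v⟫ • u - o.areaForm u v • o.rightAngleRotation u‖ = 0 := by
    have h6 : (‖u‖^2) * ‖(‖u‖^2 : ℝ) • v - ⟪u, v⟫ • u - o.areaForm u v • o.rightAngleRotation u‖^2 = 0 := by linarith
    have h7 := (mul_eq_zero.mp h6).resolve_left (pow_ne_zero 2 (norm_ne_zero_iff.mpr hu))
    exact pow_eq_zero_iff two_ne_zero |>.mp h7
  rw [norm_eq_zero, sub_sub, sub_eq_zero] at h4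
  exact h4

lemma my_angle_iff {u v t : V} (hu : u ≠ 0) (hv : v ≠ 0) (ht : t ≠ 0) :
    Real.pi ≤ angle v u + angle u t ↔
      ⟪u, v⟫ * ‖t‖ + ⟪u, t⟫ * ‖v‖ ≤ 0 := by
  have hnu : (0:ℝ) < ‖u‖ := norm_pos_iff.mpr hu
  have hnv : (0:ℝ) < ‖v‖ := norm_pos_iff.mpr hv
  have hnt : (0:ℝ) < ‖t‖ := norm_pos_iff.mpr ht
  have h1 : Real.pi ≤ angle v u + angle u t ↔ angle (-u) t ≤ angle v u := by
    rw [angle_neg_left]; constructor <;> intro h <;> linarith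
  rw [h1, ← Real.strictAntiOn_cos.le_iff_ge
      ⟨angle_nonneg v u, angle_le_pi v u⟩ ⟨angle_nonneg (-u) t, angle_le_pi (-u) t⟩,
    cos_angle, cos_angle, inner_neg_left, norm_neg,
    div_le_div_iff₀ (by positivity) (by positivity)]
  rw [real_inner_comm v u]
  constructor <;> intro h <;> nlinarith



lemma my_side_iff {x y z w : V} (hwx : w ≠ x) :
    (affineSpan ℝ ({x, w} : Set V)).SSameSide y z ↔
      0 < o.areaForm (x - w) (y - w) * o.areaForm (x - w) (z - w) := by
  set u := x - w with hu_def
  have hu : u ≠ 0 := sub_ne_zero_of_ne hwx.symm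
  have hnu2 : (‖u‖^2 : ℝ) ≠ 0 := pow_ne_zero 2 (norm_ne_zero_iff.mpr hu)
  have hws : w ∈ affineSpan ℝ ({x, w} : Set V) := subset_affineSpan ℝ _ (by simp)
  have hmem : ∀ e : V, e ∈ affineSpan ℝ ({x, w} : Set V) ↔ ∃ c : ℝ, e - w = c • u := by
    intro e
    rw [← AffineSubspace.vsub_right_mem_direction_iff_mem hws, direction_affineSpan,
      vectorSpan_pair, Submodule.mem_span_singleton]
    simp only [vsub_eq_sub, hu_def]
    exact ⟨fun ⟨c, hc⟩ => ⟨c, hc.symm⟩, fun ⟨c, hc⟩ => ⟨c, hc.symm⟩⟩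
  have himem : ∀ e : V, e ∈ affineSpan ℝ ({x, w} : Set V) ↔ o.areaForm u (e - w) = 0 := by
    intro e
    rw [hmem e]
    constructor
    · rintro ⟨c, hc⟩; rw [hc]; simp
    · intro h
      refine ⟨(‖u‖^2 : ℝ)⁻¹ * ⟪u, e - w⟫, ?_⟩
      have hd := my_decomp o hu (e - w)
      rw [h, zero_smul, add_zero] at hd
      rw [mul_smul, ← hd, inv_smul_smul₀ hnu2]
  -- key decompositions
  have hdv : y - w - ((‖u‖^2 : ℝ)⁻¹ * ⟪u, y - w⟫) • u
      = ((‖u‖^2 : ℝ)⁻¹ * o.areaForm u (y - w)) • o.rightAngleRotation u := by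
    have hd := my_decomp o hu (y - w)
    rw [mul_smul, mul_smul, eq_inv_smul_iff₀ hnu2, smul_sub, hd, smul_smul,
      mul_inv_cancel₀ hnu2, one_smul]
    abel
  have hdt : z - w - ((‖u‖^2 : ℝ)⁻¹ * ⟪u, z - w⟫) • u
      = ((‖u‖^2 : ℝ)⁻¹ * o.areaForm u (z - w)) • o.rightAngleRotation u := by
    have hd := my_decomp o hu (z - w)
    rw [mul_smul, mul_smul, eq_inv_smul_iff₀ hnu2, smul_sub, hd, smul_smul,
      mul_inv_cancel₀ hnu2, one_smul]
    abel
  constructor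
  · rintro ⟨⟨p₁, hp₁, p₂, hp₂, hray⟩, hy, hz⟩
    have hq : o.areaForm u (y - w) ≠ 0 := fun h => hy ((himem y).mpr h)
    have hs : o.areaForm u (z - w) ≠ 0 := fun h => hz ((himem z).mpr h)
    obtain ⟨c₁, hc₁⟩ := (hmem p₁).mp hp₁
    obtain ⟨c₂, hc₂⟩ := (hmem p₂).mp hp₂
    have e₁ : o.areaForm u (y -ᵥ p₁) = o.areaForm u (y - w) := by
      rw [vsub_eq_sub, show y - p₁ = (y - w) - (p₁ - w) by abel, hc₁]
      simp
    have e₂ : o.areaForm u (z -ᵥ p₂) = o.areaForm u (z - w) := by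
      rw [vsub_eq_sub, show z - p₂ = (z - w) - (p₂ - w) by abel, hc₂]
      simp
    rcases hray with h0 | h0 | ⟨r₁, r₂, hr₁, hr₂, hr⟩
    · exact absurd (by rw [← e₁, h0]; simp) hq
    · exact absurd (by rw [← e₂, h0]; simp) hs
    · have := congrArg (o.areaForm u) hr
      simp only [map_smul, smul_eq_mul, e₁, e₂] at this
      have h5 : r₁ * (o.areaForm u (y - w) * o.areaForm u (z - w))
          = r₂ * (o.areaForm u (z - w) * o.areaForm u (z - w)) := by
        linear_combination o.areaForm u (z - w) * this
      nlinarith [mul_pos hr₂ (mul_self_pos.mpr hs), hr₁]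
  · intro hpos
    have hq : o.areaForm u (y - w) ≠ 0 := by
      intro h; rw [h] at hpos; simp at hpos
    have hs : o.areaForm u (z - w) ≠ 0 := by
      intro h; rw [h] at hpos; simp at hpos
    refine ⟨⟨((‖u‖^2 : ℝ)⁻¹ * ⟪u, y - w⟫) • u + w, ?_, ((‖u‖^2 : ℝ)⁻¹ * ⟪u, z - w⟫) • u + w, ?_, ?_⟩,
      fun h => hq ((himem y).mp h), fun h => hs ((himem z).mp h)⟩
    · exact (hmem _).mpr ⟨_, by abel⟩
    · exact (hmem _).mpr ⟨_, by abel⟩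
    · have ey : y -ᵥ (((‖u‖^2 : ℝ)⁻¹ * ⟪u, y - w⟫) • u + w)
          = ((‖u‖^2 : ℝ)⁻¹ * o.areaForm u (y - w)) • o.rightAngleRotation u := by
        rw [vsub_eq_sub, ← hdv]; abel
      have ez : z -ᵥ (((‖u‖^2 : ℝ)⁻¹ * ⟪u, z - w⟫) • u + w)
          = ((‖u‖^2 : ℝ)⁻¹ * o.areaForm u (z - w)) • o.rightAngleRotation u := by
        rw [vsub_eq_sub, ← hdt]; abel
      rw [ey, ez]
      refine Or.inr (Or.inr ⟨|o.areaForm u (z - w)|, |o.areaForm u (y - w)|,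
        abs_pos.mpr hs, abs_pos.mpr hq, ?_⟩)
      rw [smul_smul, smul_smul]
      congr 1
      rcases mul_pos_iff.mp hpos with ⟨h1, h2⟩ | ⟨h1, h2⟩
      · rw [abs_of_pos h2, abs_of_pos h1]; ring
      · rw [abs_of_neg h2, abs_of_neg h1]; ring


-- square-comparison helpers
lemma my_sq1 {p q r s nu nv nt : ℝ} (hP : p^2 + q^2 = nu^2*nv^2) (hR : r^2 + s^2 = nu^2*nt^2)
    (hnu : 0 < nu) (hnv : 0 < nv) (hnt : 0 < nt)
    (hp : 0 < p) (hr : r ≤ 0) (hkey : p*|s| ≤ |q| * (-r)) : p*nt + r*nv ≤ 0 := by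
  have key : p^2*s^2 ≤ q^2*r^2 := by
    nlinarith [sq_abs s, sq_abs q, mul_nonneg hp.le (abs_nonneg s),
      mul_nonneg (abs_nonneg q) (neg_nonneg.mpr hr), hkey]
  have e1 : nu^2*(p*nt)^2 = p^2*(r^2+s^2) := by ring_nf; nlinarith [hR, sq_nonneg p]
  have e2 : nu^2*(r*nv)^2 = r^2*(p^2+q^2) := by ring_nf; nlinarith [hP, sq_nonneg r]
  have key2 : (p*nt)^2 ≤ (r*nv)^2 := by nlinarith [key, e1, e2, sq_nonneg nu, mul_pos hnu hnu]
  nlinarith [key2, mul_pos hp hnt, mul_nonneg (neg_nonneg.mpr hr) hnv.le]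

lemma my_sq2 {p q r s nu nv nt : ℝ} (hP : p^2 + q^2 = nu^2*nv^2) (hR : r^2 + s^2 = nu^2*nt^2)
    (hnu : 0 < nu) (hnv : 0 < nv) (hnt : 0 < nt)
    (hp : 0 < p) (hr : r ≤ 0) (hang : p*nt + r*nv ≤ 0) : p*|s| ≤ |q| * (-r) := by
  have hA : 0 < p*nt := mul_pos hp hnt
  have hB : p*nt ≤ -(r*nv) := by linarith
  have key2 : (p*nt)^2 ≤ (r*nv)^2 := by
    nlinarith [mul_nonneg (sub_nonneg.mpr hB) (by nlinarith : (0:ℝ) ≤ p*nt - r*nv)]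
  have e1 : nu^2*(p*nt)^2 = p^2*(r^2+s^2) := by ring_nf; nlinarith [hR, sq_nonneg p]
  have e2 : nu^2*(r*nv)^2 = r^2*(p^2+q^2) := by ring_nf; nlinarith [hP, sq_nonneg r]
  have key : p^2*s^2 ≤ q^2*r^2 := by nlinarith [key2, e1, e2, mul_pos hnu hnu]
  nlinarith [sq_abs s, sq_abs q, mul_nonneg hp.le (abs_nonneg s),
    mul_nonneg (abs_nonneg q) (neg_nonneg.mpr hr), key]

-- forward weighted key
lemma my_wkey {p q r s b c : ℝ} (hb : 0 ≤ b) (hc : 0 ≤ c) (hbc : 0 < b + c)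
    (hE2 : b*q + c*s = 0) (hbp : b*p + c*r ≤ 0) (hp : 0 < p) :
    r ≤ 0 ∧ p*|s| ≤ |q| * (-r) := by
  have hr : r ≤ 0 := by
    by_contra h
    push_neg at h
    have h1 : b*p = 0 := by nlinarith [mul_nonneg hb hp.le, mul_nonneg hc h.le]
    have h2 : c*r = 0 := by nlinarith [mul_nonneg hb hp.le, mul_nonneg hc h.le]
    have hb0 : b = 0 := (mul_eq_zero.mp h1).resolve_right (ne_of_gt hp)
    have hc0 : c = 0 := (mul_eq_zero.mp h2).resolve_right (ne_of_gt h)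
    rw [hb0, hc0] at hbc; norm_num at hbc
  refine ⟨hr, ?_⟩
  by_cases hb0 : b = 0
  · have hcpos : 0 < c := by rw [hb0] at hbc; linarith
    have hs0 : s = 0 := by
      have : c * s = 0 := by rw [hb0] at hE2; linarith
      exact (mul_eq_zero.mp this).resolve_left (ne_of_gt hcpos)
    rw [hs0]
    simpa using mul_nonneg (abs_nonneg q) (neg_nonneg.mpr hr)
  · have hbpos : 0 < b := lt_of_le_of_ne hb (Ne.symm hb0)
    have h1 : b*|q| = c*|s| := by
      have : |b*q| = |c*s| := by rw [abs_eq_abs]; right; linarith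
      rwa [abs_mul, abs_mul, abs_of_nonneg hb, abs_of_nonneg hc] at this
    have h2 : b*p ≤ c*(-r) := by linarith
    have h3 : b*(p*|s|) ≤ b*(|q| * (-r)) := by
      have h4 := mul_le_mul_of_nonneg_right h2 (abs_nonneg s)
      nlinarith [h1, h4, abs_nonneg s, neg_nonneg.mpr hr]
    exact le_of_mul_le_mul_left h3 hbpos


lemma my_fwd {p q r s nu nv nt b c : ℝ}
    (hP : p^2 + q^2 = nu^2*nv^2) (hR : r^2 + s^2 = nu^2*nt^2)
    (hnu : 0 < nu) (hnv : 0 < nv) (hnt : 0 < nt)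
    (hb : 0 ≤ b) (hc : 0 ≤ c) (hbc : 0 < b + c)
    (hE1 : b*p + c*r ≤ 0) (hE2 : b*q + c*s = 0) :
    q*s ≤ 0 ∧ p*nt + r*nv ≤ 0 := by
  constructor
  · by_contra hcon
    push_neg at hcon
    rcases mul_pos_iff.mp hcon with ⟨h1, h2⟩ | ⟨h1, h2⟩
    · have hbq : b*q = 0 := by nlinarith [mul_nonneg hb h1.le, mul_nonneg hc h2.le]
      have hcs : c*s = 0 := by nlinarith [mul_nonneg hb h1.le, mul_nonneg hc h2.le]
      have hb0 : b = 0 := (mul_eq_zero.mp hbq).resolve_right (ne_of_gt h1)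
      have hc0 : c = 0 := (mul_eq_zero.mp hcs).resolve_right (ne_of_gt h2)
      rw [hb0, hc0] at hbc; norm_num at hbc
    · have hbq : b*q = 0 := by
        nlinarith [mul_nonneg hb (neg_nonneg.mpr h1.le), mul_nonneg hc (neg_nonneg.mpr h2.le)]
      have hcs : c*s = 0 := by
        nlinarith [mul_nonneg hb (neg_nonneg.mpr h1.le), mul_nonneg hc (neg_nonneg.mpr h2.le)]
      have hb0 : b = 0 := (mul_eq_zero.mp hbq).resolve_right (ne_of_lt h1)
      have hc0 : c = 0 := (mul_eq_zero.mp hcs).resolve_right (ne_of_lt h2)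
      rw [hb0, hc0] at hbc; norm_num at hbc
  · rcases le_or_gt p 0 with hp | hp
    · rcases le_or_gt r 0 with hr | hr
      · nlinarith [mul_nonneg (neg_nonneg.mpr hp) hnt.le, mul_nonneg (neg_nonneg.mpr hr) hnv.le]
      · obtain ⟨hple, hkey⟩ := my_wkey (p := r) (q := s) (r := p) (s := q) hc hb
          (by linarith) (by linarith) (by linarith) hr
        have := my_sq1 hR hP hnu hnt hnv hr hple hkey
        linarith
    · obtain ⟨hrle, hkey⟩ := my_wkey hb hc hbc hE2 hE1 hp
      exact my_sq1 hP hR hnu hnv hnt hp hrle hkey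

lemma my_bwd {p q r s nu nv nt : ℝ}
    (hP : p^2 + q^2 = nu^2*nv^2) (hR : r^2 + s^2 = nu^2*nt^2)
    (hnu : 0 < nu) (hnv : 0 < nv) (hnt : 0 < nt)
    (hqs : q*s ≤ 0) (hang : p*nt + r*nv ≤ 0) :
    ∃ a b c : ℝ, 0 ≤ a ∧ 0 ≤ b ∧ 0 ≤ c ∧ 0 < a + b + c ∧
      a*nu^2 + b*p + c*r = 0 ∧ b*q + c*s = 0 := by
  by_cases hdeg : q = 0 ∧ s = 0
  · obtain ⟨hq0, hs0⟩ := hdeg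
    have hpne : p ≠ 0 := by
      intro h; rw [h, hq0] at hP
      nlinarith [mul_pos (pow_pos hnu 2) (pow_pos hnv 2)]
    have hrne : r ≠ 0 := by
      intro h; rw [h, hs0] at hR
      nlinarith [mul_pos (pow_pos hnu 2) (pow_pos hnt 2)]
    have hcase : p < 0 ∨ r < 0 := by
      by_contra h
      push_neg at h
      obtain ⟨h1, h2⟩ := h
      have hp' : 0 < p := lt_of_le_of_ne h1 (Ne.symm hpne)
      have hr' : 0 < r := lt_of_le_of_ne h2 (Ne.symm hrne)
      nlinarith
    rcases hcase with hpneg | hrneg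
    · have hapos : 0 < -p/nu^2 := div_pos (by linarith) (pow_pos hnu 2)
      refine ⟨-p/nu^2, 1, 0, hapos.le, zero_le_one, le_rfl, by linarith, ?_, by rw [hq0, hs0]; ring⟩
      field_simp
      ring
    · have hapos : 0 < -r/nu^2 := div_pos (by linarith) (pow_pos hnu 2)
      refine ⟨-r/nu^2, 0, 1, hapos.le, le_rfl, zero_le_one, by linarith, ?_, by rw [hq0, hs0]; ring⟩
      field_simp
      ring
  · have habs : 0 < |s| + |q| := by
      rcases not_and_or.mp hdeg with h | h
      · have := abs_pos.mpr h; positivity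
      · have := abs_pos.mpr h; positivity
    have hkeyle : |s| * p + |q| * r ≤ 0 := by
      rcases le_or_gt p 0 with hp | hp
      · rcases le_or_gt r 0 with hr | hr
        · nlinarith [mul_nonneg (abs_nonneg s) (neg_nonneg.mpr hp),
            mul_nonneg (abs_nonneg q) (neg_nonneg.mpr hr)]
        · have := my_sq2 hR hP hnu hnt hnv hr hp (by linarith)
          nlinarith
      · have hr : r ≤ 0 := by nlinarith [mul_pos hp hnt]
        have := my_sq2 hP hR hnu hnv hnt hp hr hang
        nlinarith
    have hE2' : |s| * q + |q| * s = 0 := by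
      rcases mul_nonpos_iff.mp hqs with ⟨h1, h2⟩ | ⟨h1, h2⟩
      · rw [abs_of_nonpos h2, abs_of_nonneg h1]; ring
      · rw [abs_of_nonneg h2, abs_of_nonpos h1]; ring
    have hanneg : 0 ≤ -(|s| * p + |q| * r)/nu^2 := div_nonneg (by linarith) (pow_pos hnu 2).le
    refine ⟨-(|s| * p + |q| * r)/nu^2, |s|, |q|, hanneg, abs_nonneg s, abs_nonneg q,
      by linarith, ?_, hE2'⟩
    field_simp
    ring



omit [Fact (Module.finrank ℝ V = 2)] in
lemma my_normalize {u v t : V} {a b c : ℝ} (ha : 0 ≤ a) (hb : 0 ≤ b) (hc : 0 ≤ c)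
    (hσ : 0 < a + b + c) (h : a • u + b • v + c • t = 0) :
    ∃ a' b' c' : ℝ, 0 ≤ a' ∧ 0 ≤ b' ∧ 0 ≤ c' ∧ a' + b' + c' = 1 ∧
      a' • u + b' • v + c' • t = 0 := by
  refine ⟨a/(a+b+c), b/(a+b+c), c/(a+b+c), by positivity, by positivity, by positivity,
    by field_simp, ?_⟩
  rw [div_eq_inv_mul, div_eq_inv_mul, div_eq_inv_mul, mul_smul, mul_smul, mul_smul,
    ← smul_add, ← smul_add, h, smul_zero]

lemma my_alg {u v t : V} (hu : u ≠ 0) (hv : v ≠ 0) (ht : t ≠ 0) :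
    (∃ a b c : ℝ, 0 ≤ a ∧ 0 ≤ b ∧ 0 ≤ c ∧ a + b + c = 1 ∧ a • u + b • v + c • t = 0) ↔
      (o.areaForm u v * o.areaForm u t ≤ 0 ∧ ⟪u, v⟫ * ‖t‖ + ⟪u, t⟫ * ‖v‖ ≤ 0) := by
  have hnu : (0:ℝ) < ‖u‖ := norm_pos_iff.mpr hu
  have hnv : (0:ℝ) < ‖v‖ := norm_pos_iff.mpr hv
  have hnt : (0:ℝ) < ‖t‖ := norm_pos_iff.mpr ht
  have hnu2 : (‖u‖^2 : ℝ) ≠ 0 := pow_ne_zero 2 (ne_of_gt hnu)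
  have hP : ⟪u, v⟫^2 + (o.areaForm u v)^2 = ‖u‖^2 * ‖v‖^2 := o.inner_sq_add_areaForm_sq u v
  have hR : ⟪u, t⟫^2 + (o.areaForm u t)^2 = ‖u‖^2 * ‖t‖^2 := o.inner_sq_add_areaForm_sq u t
  constructor
  · rintro ⟨a, b, c, ha, hb, hc, habc, heq⟩
    have hE1 : a*‖u‖^2 + b*⟪u, v⟫ + c*⟪u, t⟫ = 0 := by
      have h0 := congrArg (fun e => (⟪u, e⟫ : ℝ)) heq
      simp only [inner_add_right, real_inner_smul_right, inner_zero_right,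
        real_inner_self_eq_norm_sq] at h0
      linarith
    have hE2 : b*(o.areaForm u v) + c*(o.areaForm u t) = 0 := by
      have h0 := congrArg (fun e => o.areaForm u e) heq
      simp only [map_add, map_smul, smul_eq_mul, Orientation.areaForm_apply_self,
        map_zero, mul_zero] at h0
      linarith
    have hbc : 0 < b + c := by
      rcases lt_or_ge 0 (b + c) with h | h
      · exact h
      · exfalso
        have hb0 : b = 0 := by linarith
        have hc0 : c = 0 := by linarith
        rw [hb0, hc0] at hE1 habc
        have ha1 : a = 1 := by linarith
        rw [ha1] at hE1
        nlinarith
    have hbp : b*⟪u, v⟫ + c*⟪u, t⟫ ≤ 0 := by nlinarith [mul_nonneg ha (sq_nonneg ‖u‖)]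
    exact my_fwd hP hR hnu hnv hnt hb hc hbc hbp hE2
  · rintro ⟨hqs, hang⟩
    obtain ⟨a, b, c, ha, hb, hc, hsum, hE1, hE2⟩ := my_bwd hP hR hnu hnv hnt hqs hang
    refine my_normalize ha hb hc hsum ?_
    have hv' : v = (⟪u, v⟫/‖u‖^2) • u + (o.areaForm u v/‖u‖^2) • o.rightAngleRotation u := by
      have hd := my_decomp o hu v
      rw [div_eq_inv_mul, div_eq_inv_mul, mul_smul, mul_smul, ← smul_add, ← hd,
        inv_smul_smul₀ hnu2]
    have ht' : t = (⟪u, t⟫/‖u‖^2) • u + (o.areaForm u t/‖u‖^2) • o.rightAngleRotation u := by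
      have hd := my_decomp o hu t
      rw [div_eq_inv_mul, div_eq_inv_mul, mul_smul, mul_smul, ← smul_add, ← hd,
        inv_smul_smul₀ hnu2]
    rw [hv', ht']
    match_scalars
    · field_simp
      linarith
    · field_simp
      linarith


lemma my_hull_iff {V : Type*} [AddCommGroup V] [Module ℝ V] (x y z w : V) :
    w ∈ convexHull ℝ ({x, y, z} : Set V) ↔
      ∃ a b c : ℝ, 0 ≤ a ∧ 0 ≤ b ∧ 0 ≤ c ∧ a + b + c = 1 ∧ a • x + b • y + c • z = w := by
  rw [show ({x, y, z} : Set V) = insert x {y, z} from rfl,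
    convexHull_insert ⟨y, by simp⟩, convexHull_pair]
  constructor
  · intro h
    rw [mem_convexJoin] at h
    obtain ⟨x', hx', m, hm, hseg⟩ := h
    rw [Set.mem_singleton_iff] at hx'
    subst hx'
    obtain ⟨b', c', hb', hc', hbc', hm⟩ := hm
    obtain ⟨a, d, ha, hd, had, hw⟩ := hseg
    refine ⟨a, d * b', d * c', ha, mul_nonneg hd hb', mul_nonneg hd hc', by nlinarith, ?_⟩
    rw [← hw, ← hm]
    module
  · rintro ⟨a, b, c, ha, hb, hc, habc, hw⟩
    rw [mem_convexJoin]
    by_cases hbc : b + c = 0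
    · have hb0 : b = 0 := le_antisymm (by linarith) hb
      have hc0 : c = 0 := le_antisymm (by linarith) hc
      refine ⟨x, rfl, y, left_mem_segment ℝ y z, ?_⟩
      have : w = x := by rw [← hw, hb0, hc0, show a = 1 by linarith]; module
      rw [this]; exact left_mem_segment ℝ x y
    · have hbc' : 0 < b + c := lt_of_le_of_ne (by linarith) (Ne.symm hbc)
      refine ⟨x, rfl, (b / (b + c)) • y + (c / (b + c)) • z,
        ⟨b / (b + c), c / (b + c), div_nonneg hb hbc'.le, div_nonneg hc hbc'.le,
          by field_simp, rfl⟩, ⟨a, b + c, ha, hbc'.le, by linarith, ?_⟩⟩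
    
      rw [← hw, smul_add, smul_smul, smul_smul, mul_div_cancel₀ _ hbc, mul_div_cancel₀ _ hbc, add_assoc]


end MyAux

/-- Lemma 3.14 (convex-hull separation): for `w ∉ {x,y,z}` (and `w ≠ y`, `w ≠ z`),
`w ∈ conv{x,y,z}` iff `y` and `z` are not strictly on the same side of the line through
`x` and `w`, and `∠ y w x + ∠ x w z ≥ π`. -/
theorem mem_convexHull_iff_side_angle
    (x y z w : EuclideanSpace ℝ (Fin 2))
    (hwx : w ≠ x) (hwy : w ≠ y) (hwz : w ≠ z) :
    w ∈ convexHull ℝ ({x, y, z} : Set (EuclideanSpace ℝ (Fin 2))) ↔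
      (¬ (affineSpan ℝ ({x, w} : Set (EuclideanSpace ℝ (Fin 2)))).SSameSide y z ∧
        Real.pi ≤ EuclideanGeometry.angle y w x + EuclideanGeometry.angle x w z) := by
  haveI : Fact (Module.finrank ℝ (EuclideanSpace ℝ (Fin 2)) = 2) := ⟨finrank_euclideanSpace_fin⟩
  set o : Orientation ℝ (EuclideanSpace ℝ (Fin 2)) (Fin 2) :=
    (EuclideanSpace.basisFun (Fin 2) ℝ).toBasis.orientation with ho
  have hu : x - w ≠ 0 := sub_ne_zero_of_ne (Ne.symm hwx)
  have hv : y - w ≠ 0 := sub_ne_zero_of_ne (Ne.symm hwy)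
  have ht : z - w ≠ 0 := sub_ne_zero_of_ne (Ne.symm hwz)
  have hang1 : EuclideanGeometry.angle y w x = InnerProductGeometry.angle (y - w) (x - w) := rfl
  have hang2 : EuclideanGeometry.angle x w z = InnerProductGeometry.angle (x - w) (z - w) := rfl
  have hcomb : (∃ a b c : ℝ, 0 ≤ a ∧ 0 ≤ b ∧ 0 ≤ c ∧ a + b + c = 1 ∧
      a • x + b • y + c • z = w) ↔
      (∃ a b c : ℝ, 0 ≤ a ∧ 0 ≤ b ∧ 0 ≤ c ∧ a + b + c = 1 ∧
      a • (x - w) + b • (y - w) + c • (z - w) = 0) := by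
    have hkey : ∀ a b c : ℝ, a + b + c = 1 →
        (a • x + b • y + c • z = w ↔ a • (x - w) + b • (y - w) + c • (z - w) = 0) := by
      intro a b c habc
      have hid : a • (x - w) + b • (y - w) + c • (z - w)
          = a • x + b • y + c • z - (a + b + c) • w := by module
      rw [hid, habc, one_smul, sub_eq_zero]
    constructor
    · rintro ⟨a, b, c, ha, hb, hc, habc, h⟩
      exact ⟨a, b, c, ha, hb, hc, habc, (hkey a b c habc).mp h⟩
    · rintro ⟨a, b, c, ha, hb, hc, habc, h⟩
      exact ⟨a, b, c, ha, hb, hc, habc, (hkey a b c habc).mpr h⟩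
  rw [my_hull_iff, hcomb, my_alg o hu hv ht, my_side_iff o hwx, not_lt, hang1, hang2,
    my_angle_iff hu hv ht]
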